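/- Let m and n be cardinals with 1 < m < n and let λ > 0. Then 2·d_GH(λΔ_n, λΔ_m) = λ, and the metric segment [λΔ_n, λΔ_m] cannot be extended beyond λΔ_m: there is no metric space Z with d_GH(λΔ_m, Z) > 0 and d_GH(λΔ_n, λΔ_m) + d_GH(λΔ_m, Z) = d_GH(λΔ_n, Z) < ∞. -/

import Mathlib

open Metric Set
open scoped ENNReal

/-- A correspondence between `X` and `Y`: a relation whose projections are surjective. -/
def IsCorrespondence {X Y : Type*} (R : Set (X × Y)) : Prop :=
  (∀ x : X, ∃ y : Y, (x, y) ∈ R) ∧ (∀ y : Y, ∃ x : X, (x, y) ∈ R)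

/-- The distortion of a relation `R ⊆ X × Y`. -/
noncomputable def corrDistortion {X Y : Type*} [MetricSpace X] [MetricSpace Y]
    (R : Set (X × Y)) : ℝ≥0∞ :=
  ⨆ p ∈ R, ⨆ q ∈ R, ENNReal.ofReal |dist p.1 q.1 - dist p.2 q.2|

/-- The Gromov–Hausdorff distance between (arbitrary) metric spaces:
half the infimum of distortions of correspondences. -/
noncomputable def ghDist (X Y : Type*) [MetricSpace X] [MetricSpace Y] : ℝ≥0∞ :=
  (⨅ (R : Set (X × Y)) (_ : IsCorrespondence R), corrDistortion R) / 2

lemma term_le_corrDistortion {X Y : Type*} [MetricSpace X] [MetricSpace Y]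
    {R : Set (X × Y)} {p q : X × Y} (hp : p ∈ R) (hq : q ∈ R) :
    ENNReal.ofReal |dist p.1 q.1 - dist p.2 q.2| ≤ corrDistortion R := by
  refine le_iSup₂_of_le p hp ?_
  exact le_iSup₂_of_le q hq le_rfl

lemma corrDistortion_le {X Y : Type*} [MetricSpace X] [MetricSpace Y]
    {R : Set (X × Y)} {c : ℝ≥0∞}
    (h : ∀ p ∈ R, ∀ q ∈ R, ENNReal.ofReal |dist p.1 q.1 - dist p.2 q.2| ≤ c) :
    corrDistortion R ≤ c :=
  iSup₂_le fun p hp => iSup₂_le fun q hq => h p hp q hq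

/-- for simplexes `λΔ_n` (the space `N`) and `λΔ_m` (the space `M`) with
`1 < m < n` and `λ > 0`, one has `2·d_GH(λΔ_n, λΔ_m) = λ`, and the metric segment
`[λΔ_n, λΔ_m]` cannot be extended beyond `λΔ_m`. -/
theorem stmt18 {N M : Type u} [MetricSpace N] [MetricSpace M]
    (lam : ℝ) (hlam : 0 < lam)
    (hN : ∀ p q : N, p ≠ q → dist p q = lam)
    (hM : ∀ p q : M, p ≠ q → dist p q = lam)
    (hM1 : 1 < Cardinal.mk M) (hMN : Cardinal.mk M < Cardinal.mk N) :
    2 * ghDist N M = ENNReal.ofReal lam ∧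
    ∀ (Z : Type v) [MetricSpace Z] [Nonempty Z],
      ¬ (0 < ghDist M Z ∧ ghDist N M + ghDist M Z = ghDist N Z ∧ ghDist N Z ≠ ⊤) := by
  have hMne : Nonempty M := by
    rw [← Cardinal.mk_ne_zero_iff]
    exact (zero_lt_one.trans hM1).ne'
  have hNne : Nonempty N := by
    rw [← Cardinal.mk_ne_zero_iff]
    exact (zero_lt_one.trans (hM1.trans hMN)).ne'
  -- distances in N and M are in {0, lam}
  have hNd : ∀ p q : N, dist p q = 0 ∨ dist p q = lam := by
    intro p q
    by_cases h : p = q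
    · exact Or.inl (by simp [h])
    · exact Or.inr (hN p q h)
  have hMd : ∀ p q : M, dist p q = 0 ∨ dist p q = lam := by
    intro p q
    by_cases h : p = q
    · exact Or.inl (by simp [h])
    · exact Or.inr (hM p q h)
  -- every correspondence between N and M has distortion exactly ofReal lam
  have hub : ∀ R : Set (N × M), corrDistortion R ≤ ENNReal.ofReal lam := by
    intro R
    refine corrDistortion_le fun p _ q _ => ENNReal.ofReal_le_ofReal ?_
    rcases hNd p.1 q.1 with h1 | h1 <;> rcases hMd p.2 q.2 with h2 | h2 <;>
      rw [h1, h2] <;> simp [abs_le, hlam.le] <;> linarith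
  have hlb : ∀ R : Set (N × M), IsCorrespondence R →
      ENNReal.ofReal lam ≤ corrDistortion R := by
    intro R hR
    choose g hg using hR.1
    have hginj : ¬ Function.Injective g := by
      intro hinj
      exact absurd (Cardinal.mk_le_of_injective hinj) (not_le.mpr hMN)
    rw [Function.not_injective_iff] at hginj
    obtain ⟨a, b, hgab, hab⟩ := hginj
    have := term_le_corrDistortion (hg a) (hg b)
    simp only at this
    rw [hN a b hab, hgab, dist_self] at this
    simpa [abs_of_nonneg hlam.le] using this
  have hinfNM : (⨅ (R : Set (N × M)) (_ : IsCorrespondence R), corrDistortion R)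
      = ENNReal.ofReal lam := by
    apply le_antisymm
    · have huniv : IsCorrespondence (univ : Set (N × M)) := by
        constructor
        · intro x; exact ⟨Classical.arbitrary M, mem_univ _⟩
        · intro y; exact ⟨Classical.arbitrary N, mem_univ _⟩
      exact le_trans (iInf₂_le univ huniv) (hub univ)
    · exact le_iInf₂ fun R hR => hlb R hR
  have hghNM : ghDist N M = ENNReal.ofReal lam / 2 := by
    rw [ghDist, hinfNM]
  constructor
  · rw [hghNM, ENNReal.mul_div_cancel two_ne_zero ENNReal.ofNat_ne_top]
  · intro Z _ _ ⟨hpos, heq, hne⟩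
    set IMZ := ⨅ (R : Set (M × Z)) (_ : IsCorrespondence R), corrDistortion R with hIMZ
    set INZ := ⨅ (R : Set (N × Z)) (_ : IsCorrespondence R), corrDistortion R with hINZ
    have hMZ0 : IMZ ≠ 0 := by
      intro h
      rw [ghDist, ← hIMZ, h] at hpos
      simp at hpos
    have hNZtop : INZ ≠ ⊤ := by
      intro h
      rw [ghDist, ← hINZ, h] at hne
      exact hne (ENNReal.top_div_of_ne_top ENNReal.ofNat_ne_top)
    -- turn the gh equality into an equality of infima
    have hsum : ENNReal.ofReal lam + IMZ = INZ := by
      rw [hghNM, ghDist, ghDist, ← hIMZ, ← hINZ, ENNReal.div_add_div_same] at heq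
      have := congrArg (2 * ·) heq
      simpa [ENNReal.mul_div_cancel two_ne_zero ENNReal.ofNat_ne_top] using this
    have hMZtop : IMZ ≠ ⊤ := by
      intro h
      rw [h, add_top] at hsum
      exact hNZtop hsum.symm
    have hlam2_ne : ENNReal.ofReal lam / 2 ≠ 0 := by
      simp [ENNReal.div_eq_zero_iff, ENNReal.ofNat_ne_top, ENNReal.ofReal_eq_zero, hlam.not_ge]
    -- choose a near-optimal correspondence between M and Z
    have hlt : IMZ < IMZ + ENNReal.ofReal lam / 2 :=
      ENNReal.lt_add_right hMZtop hlam2_ne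
    rw [hIMZ] at hlt
    obtain ⟨R, hRlt⟩ := iInf_lt_iff.mp hlt
    obtain ⟨hR, hRlt⟩ := iInf_lt_iff.mp hRlt
    -- a surjection f : N → M
    obtain ⟨g⟩ := (Cardinal.le_def M N).mp hMN.le
    set f : N → M := Function.invFun g with hf
    have hfsurj : Function.Surjective f := Function.invFun_surjective g.injective
    -- the induced correspondence between N and Z
    set S : Set (N × Z) := {p : N × Z | (f p.1, p.2) ∈ R} with hS
    have hScorr : IsCorrespondence S := by
      constructor
      · intro n
        obtain ⟨z, hz⟩ := hR.1 (f n)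
        exact ⟨z, hz⟩
      · intro z
        obtain ⟨m, hm⟩ := hR.2 z
        obtain ⟨n, hn⟩ := hfsurj m
        exact ⟨n, by simp [hS, hn, hm]⟩
    have hSbound : corrDistortion S ≤ max (ENNReal.ofReal lam) (corrDistortion R) := by
      refine corrDistortion_le fun p hp q hq => ?_
      have hp' : (f p.1, p.2) ∈ R := hp
      have hq' : (f q.1, q.2) ∈ R := hq
      have hRterm := term_le_corrDistortion hp' hq'
      simp only at hRterm
      by_cases hff : f p.1 = f q.1
      · rw [hff, dist_self] at hRterm
        by_cases hpq : p.1 = q.1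
        · rw [hpq, dist_self]
          exact le_max_of_le_right hRterm
        · rw [hN p.1 q.1 hpq]
          by_cases hd : dist p.2 q.2 ≤ lam
          · refine le_max_of_le_left (ENNReal.ofReal_le_ofReal ?_)
            rw [abs_of_nonneg (by linarith)]
            linarith [dist_nonneg (x := p.2) (y := q.2)]
          · refine le_max_of_le_right (le_trans (ENNReal.ofReal_le_ofReal ?_) hRterm)
            rw [abs_of_nonpos (by linarith), abs_of_nonpos (by simp [dist_nonneg])]
            simp
            linarith [dist_nonneg (x := p.2) (y := q.2)]
      · have hpq : p.1 ≠ q.1 := fun h => hff (by rw [h])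
        rw [hN p.1 q.1 hpq]
        rw [hM (f p.1) (f q.1) hff] at hRterm
        exact le_max_of_le_right hRterm
    -- derive the contradiction
    have hfin : INZ < INZ := by
      calc INZ ≤ corrDistortion S := iInf₂_le S hScorr
        _ ≤ max (ENNReal.ofReal lam) (corrDistortion R) := hSbound
        _ < ENNReal.ofReal lam + IMZ := by
            refine max_lt ?_ ?_
            · exact ENNReal.lt_add_right ENNReal.ofReal_ne_top hMZ0
            · calc corrDistortion R < IMZ + ENNReal.ofReal lam / 2 := hRlt
                _ < IMZ + ENNReal.ofReal lam := by
                    refine ENNReal.add_lt_add_left hMZtop ?_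
                    exact ENNReal.half_lt_self
                      (by simp [ENNReal.ofReal_eq_zero, hlam.not_ge]) ENNReal.ofReal_ne_top
                _ = ENNReal.ofReal lam + IMZ := add_comm _ _
        _ = INZ := hsum
    exact absurd hfin (lt_irrefl _)
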